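/- Let Y : ℝ²_{≥0} → ℝ_{≥0} be differentiable on the open positive quadrant, positive there, homogeneous of degree 1, and suppose there exists β > 0 such that for all w, r, K₀, L₀ > 0: the cost c(K,L) = rK + wL has a unique minimum on some isoquant {Y = q} (q > 0) at (K₀,L₀) if and only if K₀ = L₀·(w/r)·β. Then there exist A > 0 and 0 < α < 1 (namely α = β/(β+1)) with Y(K,L) = A·K^α·L^(1−α) for all K, L > 0. -/

import Mathlib

open Real Filter

lemma exp_quad_aux {s : ℝ} (h : |s| ≤ 1) : Real.exp s ≤ 1 + s + s ^ 2 := by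
  have h2 := Real.exp_bound h (n := 2) (by norm_num)
  have hsum : ∑ m ∈ Finset.range 2, s ^ m / m.factorial = 1 + s := by
    simp [Finset.sum_range_succ]
  rw [hsum] at h2
  norm_num at h2
  have h3 := (abs_le.mp h2).2
  nlinarith [sq_abs s, sq_nonneg s]

theorem stmt_7 (Y : ℝ × ℝ → ℝ)
    (hnonneg : ∀ K L : ℝ, 0 ≤ K → 0 ≤ L → 0 ≤ Y (K, L))
    (hpos : ∀ K L : ℝ, 0 < K → 0 < L → 0 < Y (K, L))
    (hdiff : ∀ K L : ℝ, 0 < K → 0 < L → DifferentiableAt ℝ Y (K, L))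
    (hhom : ∀ t > (0:ℝ), ∀ K L : ℝ, 0 < K → 0 < L → Y (t * K, t * L) = t * Y (K, L))
    (β : ℝ) (hβ : 0 < β)
    (hcond : ∀ w r K₀ L₀ : ℝ, 0 < w → 0 < r → 0 < K₀ → 0 < L₀ →
      ((∃ q > (0:ℝ), Y (K₀, L₀) = q ∧
          ∀ K L : ℝ, 0 < K → 0 < L → Y (K, L) = q → (K, L) ≠ (K₀, L₀) →
            r * K₀ + w * L₀ < r * K + w * L)
        ↔ K₀ = L₀ * (w / r) * β)) :
    ∃ A : ℝ, 0 < A ∧ ∃ α : ℝ, α = β / (β + 1) ∧ 0 < α ∧ α < 1 ∧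
      ∀ K L : ℝ, 0 < K → 0 < L → Y (K, L) = A * K ^ α * L ^ (1 - α) := by
  have hβ1 : (0:ℝ) < β + 1 := by linarith
  -- Step 1: the key inequality derived from the cost-minimization condition
  have key : ∀ a b c d : ℝ, 0 < a → 0 < b → 0 < c → 0 < d →
      (β + 1) * Y (c, d) ≤ Y (a, b) * (β * c / a + d / b) := by
    intro a b c d ha hb hc hd
    have hw : (0:ℝ) < a / (b * β) := by positivity
    have hK : a = b * ((a / (b * β)) / 1) * β := by field_simp
    obtain ⟨q, hq, hYq, hmin⟩ := (hcond (a / (b * β)) 1 a b hw one_pos ha hb).mpr hK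
    have hYcd := hpos c d hc hd
    set s := q / Y (c, d) with hs
    have hspos : 0 < s := by positivity
    have hYs : Y (s * c, s * d) = q := by
      rw [hhom s hspos c d hc hd, hs]; field_simp
    have hq' : q = s * Y (c, d) := by rw [hs]; field_simp
    by_cases hne : (s * c, s * d) = (a, b)
    · have h1 : s * c = a := congrArg Prod.fst hne
      have h2 : s * d = b := congrArg Prod.snd hne
      subst h1 h2
      rw [hYs, hq']
      have hrw : s * Y (c, d) * (β * c / (s * c) + d / (s * d)) = (β + 1) * Y (c, d) := by
        field_simp
      rw [hrw]
    · have hlt := hmin (s * c) (s * d) (by positivity) (by positivity) hYs hne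
      rw [one_mul, one_mul] at hlt
      have e1 : a / (b * β) * b = a / β := by field_simp; try ring
      have e2 : a / (b * β) * (s * d) = a * (s * d) / (b * β) := by ring
      rw [e1, e2] at hlt
      have h5 := mul_lt_mul_of_pos_right hlt (show (0:ℝ) < b * β by positivity)
      have e3 : (a + a / β) * (b * β) = a * b * β + a * b := by field_simp
      have e4 : (s * c + a * (s * d) / (b * β)) * (b * β) = s * c * b * β + a * s * d := by
        field_simp
      rw [e3, e4] at h5
      rw [hYq, hq']
      have hrw : β * c / a + d / b = (β * c * b + d * a) / (a * b) := by field_simp; try ring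
      rw [hrw, ← mul_div_assoc, le_div_iff₀ (by positivity : (0:ℝ) < a * b)]
      nlinarith [mul_lt_mul_of_pos_left h5 hYcd]
  -- Step 2: Y is constant on the curves x ↦ (exp x, exp (-βx))
  have Geq : ∀ x : ℝ, Y (Real.exp x, Real.exp (-(β * x))) = Y (1, 1) := by
    set G : ℝ → ℝ := fun x => Y (Real.exp x, Real.exp (-(β * x))) with hG
    set m : ℝ → ℝ := fun d => (β * Real.exp d + Real.exp (-(β * d))) / (β + 1) with hm
    have hmpos : ∀ d, 0 < m d := fun d => by rw [hm]; positivity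
    have hGpos : ∀ x, 0 < G x := fun x => hpos _ _ (exp_pos _) (exp_pos _)
    have hG11 : G 0 = Y (1, 1) := by rw [hG]; norm_num
    have curve : ∀ x y : ℝ, G x ≤ G y * m (x - y) := by
      intro x y
      have h := key (Real.exp y) (Real.exp (-(β * y))) (Real.exp x) (Real.exp (-(β * x)))
        (exp_pos _) (exp_pos _) (exp_pos _) (exp_pos _)
      have e1 : β * Real.exp x / Real.exp y + Real.exp (-(β * x)) / Real.exp (-(β * y))
          = β * Real.exp (x - y) + Real.exp (-(β * (x - y))) := by
        rw [mul_div_assoc, ← Real.exp_sub, ← Real.exp_sub]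
        ring_nf
      rw [e1] at h
      rw [hG, hm]
      simp only []
      rw [← mul_div_assoc, le_div_iff₀ hβ1]
      nlinarith [h]
    have iter : ∀ (y d : ℝ) (k : ℕ), G (y + k * d) ≤ G y * m d ^ k := by
      intro y d k
      induction k with
      | zero => simp
      | succ k ih =>
        have h := curve (y + (k + 1 : ℕ) * d) (y + k * d)
        have e : (y + (k + 1 : ℕ) * d) - (y + k * d) = d := by push_cast; ring
        rw [e] at h
        calc G (y + (k + 1 : ℕ) * d) ≤ G (y + k * d) * m d := h
          _ ≤ (G y * m d ^ k) * m d :=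
            mul_le_mul_of_nonneg_right ih (le_of_lt (hmpos d))
          _ = G y * m d ^ (k + 1) := by ring
    have mbound : ∀ d : ℝ, |d| ≤ 1 → |β * d| ≤ 1 → m d ≤ Real.exp (β * d ^ 2) := by
      intro d h1 h2
      have e1 := exp_quad_aux h1
      have e2 := exp_quad_aux (show |(-(β * d))| ≤ 1 by rwa [abs_neg])
      have step : m d ≤ 1 + β * d ^ 2 := by
        rw [hm]
        simp only []
        rw [div_le_iff₀ hβ1]
        nlinarith [e1, e2, sq_nonneg d, hβ]
      have := Real.add_one_le_exp (β * d ^ 2)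
      linarith
    have main_le : ∀ x y : ℝ, G x ≤ G y := by
      intro x y
      set c : ℝ := β * (x - y) ^ 2 with hc
      have hc0 : 0 ≤ c := by positivity
      have hev : ∀ᶠ n : ℕ in atTop, G x ≤ G y * Real.exp (c / n) := by
        filter_upwards [eventually_ge_atTop (max 1 (Nat.ceil (|x - y| * (1 + β))))] with n hn
        have hn1 : 1 ≤ n := le_trans (le_max_left _ _) hn
        have hn0 : (0:ℝ) < n := by exact_mod_cast hn1
        have hnc : (Nat.ceil (|x - y| * (1 + β)) : ℝ) ≤ n := by
          exact_mod_cast le_trans (le_max_right _ _) hn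
        have hxyn : |x - y| * (1 + β) ≤ n := le_trans (Nat.le_ceil _) hnc
        set d : ℝ := (x - y) / n with hd
        have hd1 : |d| ≤ 1 := by
          rw [hd, abs_div, abs_of_pos hn0, div_le_one hn0]
          nlinarith [abs_nonneg (x - y), hβ]
        have hd2 : |β * d| ≤ 1 := by
          rw [hd, ← mul_div_assoc, abs_div, abs_of_pos hn0, div_le_one hn0, abs_mul,
            abs_of_pos hβ]
          nlinarith [abs_nonneg (x - y), hβ]
        have h1 : G x ≤ G y * m d ^ n := by
          have := iter y d n
          rw [hd] at this
          have e : y + (n : ℝ) * ((x - y) / n) = x := by field_simp; ring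
          rwa [e] at this
        have h2 : m d ^ n ≤ Real.exp (c / n) := by
          calc m d ^ n ≤ Real.exp (β * d ^ 2) ^ n :=
                pow_le_pow_left₀ (le_of_lt (hmpos d)) (mbound d hd1 hd2) n
            _ = Real.exp (n * (β * d ^ 2)) := by rw [← Real.exp_nat_mul]
            _ = Real.exp (c / n) := by
                congr 1
                rw [hd, hc]
                field_simp
        calc G x ≤ G y * m d ^ n := h1
          _ ≤ G y * Real.exp (c / n) := mul_le_mul_of_nonneg_left h2 (le_of_lt (hGpos y))
      have hlim : Tendsto (fun n : ℕ => G y * Real.exp (c / n)) atTop (nhds (G y)) := by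
        have h0 : Tendsto (fun n : ℕ => c / n) atTop (nhds 0) :=
          tendsto_const_div_atTop_nhds_zero_nat c
        have h1 : Tendsto (fun n : ℕ => Real.exp (c / n)) atTop (nhds 1) := by
          have h := (Real.continuous_exp.tendsto 0).comp h0
          rw [Real.exp_zero] at h
          exact h
        simpa using tendsto_const_nhds.mul h1
      exact ge_of_tendsto hlim hev
    intro x
    rw [← hG11]
    exact le_antisymm (main_le x 0) (main_le 0 x)
  -- Step 3: conclude the Cobb–Douglas form
  have hA : 0 < Y (1, 1) := hpos 1 1 one_pos one_pos
  refine ⟨Y (1, 1), hA, β / (β + 1), rfl, by positivity, ?_, ?_⟩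
  · rw [div_lt_one hβ1]; linarith
  · intro K L hK hL
    set x : ℝ := (Real.log K - Real.log L) / (β + 1) with hx
    set s : ℝ := Real.exp ((β * Real.log K + Real.log L) / (β + 1)) with hs
    have hspos : 0 < s := exp_pos _
    have h1 : s * Real.exp x = K := by
      rw [hs, hx, ← Real.exp_add, ← Real.exp_log hK]
      congr 1
      field_simp
      simp only [Real.log_exp]
      ring
    have h2 : s * Real.exp (-(β * x)) = L := by
      rw [hs, hx, ← Real.exp_add, ← Real.exp_log hL]
      congr 1
      field_simp
      simp only [Real.log_exp]
      ring
    have h3 : Y (K, L) = s * Y (1, 1) := by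
      rw [← h1, ← h2, hhom s hspos _ _ (exp_pos _) (exp_pos _), Geq x]
    rw [h3]
    rw [Real.rpow_def_of_pos hK, Real.rpow_def_of_pos hL]
    have hcomb : Real.exp (Real.log K * (β / (β + 1))) *
        Real.exp (Real.log L * (1 - β / (β + 1))) = s := by
      rw [← Real.exp_add, hs]
      congr 1
      field_simp
      ring
    rw [mul_assoc, hcomb, mul_comm]
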